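/- Pointwise form of the Corollary on conditional PNS with multi-hypothetical terms and evidence under strict monotonicity: In the strict-monotonicity evidence setup, let P ≥ 1, let x₀, x₁, …, x_P ∈ 𝒳 be treatments and y₁, …, y_P ∈ 𝒴 be thresholds. For every latent value u₀ ∈ ℝ and every treatment x' ∈ 𝒳, writing y' := f x' u₀ (so that u₀ is compatible with the evidence (Y = y', X = x', C = c)), the joint counterfactual event holds exactly when the CDF condition holds: (∀ p ∈ {1,…,P}, f x_{p−1} u₀ ≺ y_p ∧ y_p ≼ f x_p u₀) ↔ (∀ p ∈ {1,…,P}, ρ(y_p; x_p) ≤ ρ(y';x') ∧ ρ(y';x') < ρ(y_p; x_{p−1})). In other words, given such evidence the conditional PNS with multi-hypothetical terms equals the indicator 𝕀(max over p of ρ(y_p;x_p,c) ≤ ρ(y';x',c) < min over p of ρ(y_p;x_{p−1},c)). -/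

import Mathlib

open MeasureTheory

lemma aux_mono_lt {𝒴 : Type*} [LinearOrder 𝒴] [TopologicalSpace 𝒴] [OrderTopology 𝒴]
    (ν : Measure ℝ) [IsProbabilityMeasure ν]
    (hsupp : ∀ a b : ℝ, a < b → 0 < ν (Set.Ioo a b))
    (g : ℝ → 𝒴) (hc : Continuous g) (hm : StrictMono g) (y : 𝒴) (u₀ : ℝ) :
    g u₀ < y ↔ ν (Set.Iio u₀) < ν {u | g u < y} := by
  constructor
  · intro h
    have hopen : IsOpen {u | g u < y} := isOpen_lt hc continuous_const
    obtain ⟨ε, hε, hball⟩ := Metric.isOpen_iff.1 hopen u₀ h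
    have hsub : Set.Iio u₀ ∪ Set.Ioo u₀ (u₀ + ε) ⊆ {u | g u < y} := by
      rintro u (hu | hu)
      · exact (hm hu).trans h
      · apply hball
        simp only [Metric.mem_ball, Real.dist_eq, abs_lt]
        constructor <;> [linarith [hu.1]; linarith [hu.2]]
    have hdisj : Disjoint (Set.Iio u₀) (Set.Ioo u₀ (u₀ + ε)) := by
      rw [Set.disjoint_left]
      rintro u hu ⟨h1, _⟩
      exact absurd h1 (not_lt.2 hu.le)
    calc ν (Set.Iio u₀) < ν (Set.Iio u₀) + ν (Set.Ioo u₀ (u₀ + ε)) :=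
          ENNReal.lt_add_right (measure_ne_top ν _) (hsupp _ _ (by linarith)).ne'
      _ = ν (Set.Iio u₀ ∪ Set.Ioo u₀ (u₀ + ε)) :=
          (measure_union hdisj measurableSet_Ioo).symm
      _ ≤ ν {u | g u < y} := measure_mono hsub
  · contrapose!
    intro h
    refine measure_mono fun u hu => ?_
    exact hm.lt_iff_lt.1 (lt_of_lt_of_le hu h)

lemma aux_anti_lt {𝒴 : Type*} [LinearOrder 𝒴] [TopologicalSpace 𝒴] [OrderTopology 𝒴]
    (ν : Measure ℝ) [IsProbabilityMeasure ν]
    (hsupp : ∀ a b : ℝ, a < b → 0 < ν (Set.Ioo a b))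
    (g : ℝ → 𝒴) (hc : Continuous g) (hm : StrictAnti g) (y : 𝒴) (u₀ : ℝ) :
    g u₀ < y ↔ ν (Set.Ioi u₀) < ν {u | g u < y} := by
  constructor
  · intro h
    have hopen : IsOpen {u | g u < y} := isOpen_lt hc continuous_const
    obtain ⟨ε, hε, hball⟩ := Metric.isOpen_iff.1 hopen u₀ h
    have hsub : Set.Ioi u₀ ∪ Set.Ioo (u₀ - ε) u₀ ⊆ {u | g u < y} := by
      rintro u (hu | hu)
      · exact (hm hu).trans h
      · apply hball
        simp only [Metric.mem_ball, Real.dist_eq, abs_lt]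
        constructor <;> [linarith [hu.1]; linarith [hu.2]]
    have hdisj : Disjoint (Set.Ioi u₀) (Set.Ioo (u₀ - ε) u₀) := by
      rw [Set.disjoint_left]
      rintro u hu ⟨_, h2⟩
      exact absurd h2 (not_lt.2 hu.le)
    calc ν (Set.Ioi u₀) < ν (Set.Ioi u₀) + ν (Set.Ioo (u₀ - ε) u₀) :=
          ENNReal.lt_add_right (measure_ne_top ν _) (hsupp _ _ (by linarith)).ne'
      _ = ν (Set.Ioi u₀ ∪ Set.Ioo (u₀ - ε) u₀) :=
          (measure_union hdisj measurableSet_Ioo).symm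
      _ ≤ ν {u | g u < y} := measure_mono hsub
  · contrapose!
    intro h
    refine measure_mono fun u hu => ?_
    exact hm.lt_iff_gt.1 (lt_of_lt_of_le hu h)

lemma aux_mono_le {𝒴 : Type*} [LinearOrder 𝒴] [TopologicalSpace 𝒴] [OrderTopology 𝒴]
    (ν : Measure ℝ) [IsProbabilityMeasure ν]
    (hsupp : ∀ a b : ℝ, a < b → 0 < ν (Set.Ioo a b))
    (g : ℝ → 𝒴) (hc : Continuous g) (hm : StrictMono g) (y : 𝒴) (u₀ : ℝ) :
    y ≤ g u₀ ↔ ν {u | g u < y} ≤ ν (Set.Iio u₀) := by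
  rw [← not_lt, ← not_lt, aux_mono_lt ν hsupp g hc hm y u₀]

lemma aux_anti_le {𝒴 : Type*} [LinearOrder 𝒴] [TopologicalSpace 𝒴] [OrderTopology 𝒴]
    (ν : Measure ℝ) [IsProbabilityMeasure ν]
    (hsupp : ∀ a b : ℝ, a < b → 0 < ν (Set.Ioo a b))
    (g : ℝ → 𝒴) (hc : Continuous g) (hm : StrictAnti g) (y : 𝒴) (u₀ : ℝ) :
    y ≤ g u₀ ↔ ν {u | g u < y} ≤ ν (Set.Ioi u₀) := by
  rw [← not_lt, ← not_lt, aux_anti_lt ν hsupp g hc hm y u₀]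

/-- Pointwise form of the corollary on conditional PNS with multi-hypothetical terms and
evidence under strict monotonicity: for a latent value `u₀` compatible with the evidence
`(Y = y', X = x', C = c)` (i.e. `y' = f x' u₀`), the joint counterfactual event holds iff
`ρ(y_p;x_p) ≤ ρ(y';x') < ρ(y_p;x_{p−1})` for every `p`. -/
theorem pointwise_conditional_PNS_multi_hypothetical_with_evidence_strict_monotonicity
    {𝒳 𝒴 : Type*} [LinearOrder 𝒴] [TopologicalSpace 𝒴] [OrderTopology 𝒴]
    (ν : Measure ℝ) [IsProbabilityMeasure ν]
    (hsupp : ∀ a b : ℝ, a < b → 0 < ν (Set.Ioo a b))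
    (f : 𝒳 → ℝ → 𝒴) (hcont : ∀ x, Continuous (f x))
    (hstrict : (∀ x, StrictMono (f x)) ∨ (∀ x, StrictAnti (f x)))
    (P : ℕ) (hP : 0 < P) (x : Fin (P + 1) → 𝒳) (ys : Fin P → 𝒴)
    (u₀ : ℝ) (x' : 𝒳) :
    (∀ p : Fin P, f (x p.castSucc) u₀ < ys p ∧ ys p ≤ f (x p.succ) u₀) ↔
      (∀ p : Fin P,
        ν {u | f (x p.succ) u < ys p} ≤ ν {u | f x' u < f x' u₀} ∧
          ν {u | f x' u < f x' u₀} < ν {u | f (x p.castSucc) u < ys p}) := by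
  rcases hstrict with hm | hm
  · have hset : {u | f x' u < f x' u₀} = Set.Iio u₀ := by
      ext u; exact (hm x').lt_iff_lt
    rw [hset]
    refine forall_congr' fun p => ?_
    constructor
    · rintro ⟨h1, h2⟩
      exact ⟨(aux_mono_le ν hsupp _ (hcont _) (hm _) _ _).1 h2,
        (aux_mono_lt ν hsupp _ (hcont _) (hm _) _ _).1 h1⟩
    · rintro ⟨h1, h2⟩
      exact ⟨(aux_mono_lt ν hsupp _ (hcont _) (hm _) _ _).2 h2,
        (aux_mono_le ν hsupp _ (hcont _) (hm _) _ _).2 h1⟩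
  · have hset : {u | f x' u < f x' u₀} = Set.Ioi u₀ := by
      ext u; exact (hm x').lt_iff_gt
    rw [hset]
    refine forall_congr' fun p => ?_
    constructor
    · rintro ⟨h1, h2⟩
      exact ⟨(aux_anti_le ν hsupp _ (hcont _) (hm _) _ _).1 h2,
        (aux_anti_lt ν hsupp _ (hcont _) (hm _) _ _).1 h1⟩
    · rintro ⟨h1, h2⟩
      exact ⟨(aux_anti_lt ν hsupp _ (hcont _) (hm _) _ _).2 h2,
        (aux_anti_le ν hsupp _ (hcont _) (hm _) _ _).2 h1⟩
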